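/- Let c₁, c₂, c₃ ∈ ℂ and let b₁, b₂, b₃ : ℂ → ℂ be functions satisfying, for all z ∈ ℂ: b₁(z)c₁ + b₂(z)c₂ + b₃(z)c₃ = φ₂(z), b₁(z)c₁² + b₂(z)c₂² + b₃(z)c₃² = 2φ₃(z), and b₁(z)c₁³ + b₂(z)c₂³ + b₃(z)c₃³ = 6φ₄(z). Then c₁, c₂, c₃ are all nonzero and pairwise distinct, the functions b₁, b₂, b₃ are uniquely determined, and b₁, b₂, b₃ are linearly independent over ℂ. -/

import Mathlib

/-- For `k ≥ 1`, `φ_k(z) = ∫_0^1 exp((1-θ)z) θ^(k-1)/(k-1)! dθ`; `φ_0(z) = exp z`. -/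
noncomputable def phi : ℕ → ℂ → ℂ
  | 0 => fun z => Complex.exp z
  | (k + 1) => fun z =>
      ∫ θ in (0:ℝ)..1, Complex.exp ((1 - (θ : ℂ)) * z) * (θ : ℂ) ^ k / (Nat.factorial k : ℂ)

lemma exp_hasDerivAt (z : ℂ) (θ : ℝ) :
    HasDerivAt (fun t : ℝ => Complex.exp ((1 - (t : ℂ)) * z)) (-z * Complex.exp ((1 - (θ:ℂ)) * z)) θ := by
  have h1 : HasDerivAt (fun t : ℝ => ((t : ℂ))) 1 θ := Complex.ofRealCLM.hasDerivAt
  have h2 : HasDerivAt (fun t : ℝ => (1 - (t : ℂ)) * z) (-z) θ := by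
    simpa using ((h1.const_sub 1).mul_const z)
  simpa [mul_comm] using h2.cexp

lemma cont_aux (z : ℂ) (m : ℕ) :
    Continuous (fun t : ℝ => Complex.exp ((1 - (t : ℂ)) * z) * (t : ℂ) ^ m / (Nat.factorial m : ℂ)) := by
  fun_prop

lemma phi_rec (k : ℕ) (z : ℂ) : z * phi (k+1) z = phi k z - 1/(Nat.factorial k : ℂ) := by
  match k with
  | 0 =>
    have key : ∫ θ in (0:ℝ)..1, -z * Complex.exp ((1 - (θ:ℂ)) * z)
        = Complex.exp ((1 - (1:ℝ)) * z) - Complex.exp ((1 - (0:ℝ)) * z) := by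
      apply intervalIntegral.integral_eq_sub_of_hasDerivAt
        (f := fun t : ℝ => Complex.exp ((1 - (t:ℂ)) * z))
      · intro θ _
        exact exp_hasDerivAt z θ
      · exact Continuous.intervalIntegrable (by fun_prop) _ _
    rw [intervalIntegral.integral_const_mul] at key
    simp only [phi]
    simp only [Complex.ofReal_one, Complex.ofReal_zero, sub_self, zero_mul, sub_zero, one_mul,
      Complex.exp_zero, pow_zero, Nat.factorial_zero, Nat.cast_one] at key ⊢
    have : ∫ θ in (0:ℝ)..1, Complex.exp ((1 - (θ:ℂ)) * z) * 1 / 1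
        = ∫ θ in (0:ℝ)..1, Complex.exp ((1 - (θ:ℂ)) * z) := by
      congr 1; funext θ; ring
    rw [this]
    linear_combination -key
  | (m + 1) =>
    have key : ∫ θ in (0:ℝ)..1,
        (Complex.exp ((1 - (θ:ℂ)) * z) * (θ:ℂ) ^ m / (Nat.factorial m : ℂ)
          - z * (Complex.exp ((1 - (θ:ℂ)) * z) * (θ:ℂ) ^ (m+1) / (Nat.factorial (m+1) : ℂ)))
        = Complex.exp ((1 - ((1:ℝ):ℂ)) * z) * ((1:ℝ):ℂ) ^ (m+1) / (Nat.factorial (m+1) : ℂ)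
          - Complex.exp ((1 - ((0:ℝ):ℂ)) * z) * ((0:ℝ):ℂ) ^ (m+1) / (Nat.factorial (m+1) : ℂ) := by
      apply intervalIntegral.integral_eq_sub_of_hasDerivAt
        (f := fun t : ℝ => Complex.exp ((1 - (t:ℂ)) * z) * (t:ℂ) ^ (m+1) / (Nat.factorial (m+1) : ℂ))
      · intro θ _
        have hp : HasDerivAt (fun t : ℝ => ((t:ℂ)) ^ (m+1)) (((m+1 : ℕ) : ℂ) * (θ:ℂ) ^ m) θ := by
          simpa using (hasDerivAt_pow (m+1) ((θ:ℂ))).comp_ofReal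
        have := ((exp_hasDerivAt z θ).mul hp).div_const ((Nat.factorial (m+1) : ℂ))
        refine this.congr_deriv ?_
        have hfac : ((Nat.factorial (m+1) : ℂ)) = (m+1) * (Nat.factorial m : ℂ) := by
          push_cast [Nat.factorial_succ]; ring
        rw [hfac]
        have hm : ((m:ℂ)+1) ≠ 0 := Nat.cast_add_one_ne_zero m
        have hf : (Nat.factorial m : ℂ) ≠ 0 := Nat.cast_ne_zero.mpr (Nat.factorial_ne_zero m)
        field_simp
        push_cast
        ring
      · exact Continuous.intervalIntegrable (by fun_prop) _ _
    have hsplit : ∫ θ in (0:ℝ)..1,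
        (Complex.exp ((1 - (θ:ℂ)) * z) * (θ:ℂ) ^ m / (Nat.factorial m : ℂ)
          - z * (Complex.exp ((1 - (θ:ℂ)) * z) * (θ:ℂ) ^ (m+1) / (Nat.factorial (m+1) : ℂ)))
        = (∫ θ in (0:ℝ)..1, Complex.exp ((1 - (θ:ℂ)) * z) * (θ:ℂ) ^ m / (Nat.factorial m : ℂ))
          - z * ∫ θ in (0:ℝ)..1, Complex.exp ((1 - (θ:ℂ)) * z) * (θ:ℂ) ^ (m+1) / (Nat.factorial (m+1) : ℂ) := by
      rw [intervalIntegral.integral_sub (Continuous.intervalIntegrable (by fun_prop) _ _)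
        (Continuous.intervalIntegrable (by fun_prop) _ _), intervalIntegral.integral_const_mul]
    rw [hsplit] at key
    simp only [phi]
    simp only [Complex.ofReal_one, Complex.ofReal_zero, sub_self, zero_mul, one_pow,
      Complex.exp_zero, one_mul, zero_pow (Nat.succ_ne_zero m), mul_zero, zero_div, sub_zero] at key
    linear_combination -key

lemma cubic_exp (α β γ : ℂ) (h : ∀ z, α * phi 2 z + β * phi 3 z + γ * phi 4 z = 0) :
    ∀ z : ℂ, (α*z^2+β*z+γ) * Complex.exp z
      = (α+β/2+γ/6)*z^3+(α+β+γ/2)*z^2+(β+γ)*z+γ := by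
  intro z
  have r0 := phi_rec 0 z
  have r1 := phi_rec 1 z
  have r2 := phi_rec 2 z
  have r3 := phi_rec 3 z
  have hphi0 : phi 0 z = Complex.exp z := rfl
  rw [hphi0] at r0
  norm_num [Nat.factorial] at r0 r1 r2 r3
  linear_combination (-(α*z^2+β*z+γ)) * r0 + (-(α*z^2+β*z+γ)*z) * r1
    + ((-(α*z^2+β*z+γ))*z^2 + z^4*α) * r2
    + ((-(α*z^2+β*z+γ))*z^3 + z^5*α + z^4*β) * r3 + z^4 * (h z)

lemma step (α β γ a b c d : ℂ)
    (h : ∀ z : ℂ, (α*z^2+β*z+γ) * Complex.exp z = a*z^3+b*z^2+c*z+d) :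
    ∀ z : ℂ, (α*z^2+(2*α+β)*z+(β+γ)) * Complex.exp z
      = (0:ℂ)*z^3+(3*a)*z^2+(2*b)*z+c := by
  intro z
  have hf : (fun z : ℂ => (α*z^2+β*z+γ) * Complex.exp z)
      = (fun z : ℂ => a*z^3+b*z^2+c*z+d) := funext h
  have hd := congrFun (congrArg deriv hf) z
  have hL : HasDerivAt (fun z : ℂ => (α*z^2+β*z+γ) * Complex.exp z)
      ((α*(2*z)+β) * Complex.exp z + (α*z^2+β*z+γ) * Complex.exp z) z := by
    have hp : HasDerivAt (fun z : ℂ => α*z^2+β*z+γ) (α*(2*z)+β) z := by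
      have h1 : HasDerivAt (fun z : ℂ => z^2) (2*z) z := by
        simpa using hasDerivAt_pow 2 z
      simpa using ((h1.const_mul α).add ((hasDerivAt_id z).const_mul β)).add_const γ
    exact hp.mul (Complex.hasDerivAt_exp z)
  have hR : HasDerivAt (fun z : ℂ => a*z^3+b*z^2+c*z+d) ((3*a)*z^2+(2*b)*z+c) z := by
    have h3 : HasDerivAt (fun z : ℂ => z^3) (3*z^2) z := by
      simpa using hasDerivAt_pow 3 z
    have h2 : HasDerivAt (fun z : ℂ => z^2) (2*z) z := by
      simpa using hasDerivAt_pow 2 z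
    have := (((h3.const_mul a).add (h2.const_mul b)).add ((hasDerivAt_id z).const_mul c)).add_const d
    refine this.congr_deriv ?_
    ring
  rw [hL.deriv, hR.deriv] at hd
  linear_combination hd

lemma phi_indep (α β γ : ℂ) (h : ∀ z, α * phi 2 z + β * phi 3 z + γ * phi 4 z = 0) :
    α = 0 ∧ β = 0 ∧ γ = 0 := by
  have h0 := cubic_exp α β γ h
  have h4 := step _ _ _ _ _ _ _ (step _ _ _ _ _ _ _ (step _ _ _ _ _ _ _ (step _ _ _ _ _ _ _ h0)))
  have h5 := step _ _ _ _ _ _ _ h4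
  have h6 := step _ _ _ _ _ _ _ h5
  have e4 := h4 0
  have e5 := h5 0
  have e6 := h6 0
  norm_num [Complex.exp_zero] at e4 e5 e6
  have hA : α = 0 := by linear_combination (e4 - 2*e5 + e6)/2
  have hB : β = 0 := by linear_combination -5*e4 + 9*e5 - 4*e6
  have hC : γ = 0 := by linear_combination e4 - 12*hA - 4*hB
  exact ⟨hA, hB, hC⟩

theorem stmt_4 (c₁ c₂ c₃ : ℂ) (b₁ b₂ b₃ : ℂ → ℂ)
    (h1 : ∀ z : ℂ, b₁ z * c₁ + b₂ z * c₂ + b₃ z * c₃ = phi 2 z)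
    (h2 : ∀ z : ℂ, b₁ z * c₁ ^ 2 + b₂ z * c₂ ^ 2 + b₃ z * c₃ ^ 2 = 2 * phi 3 z)
    (h3 : ∀ z : ℂ, b₁ z * c₁ ^ 3 + b₂ z * c₂ ^ 3 + b₃ z * c₃ ^ 3 = 6 * phi 4 z) :
    (c₁ ≠ 0 ∧ c₂ ≠ 0 ∧ c₃ ≠ 0 ∧ c₁ ≠ c₂ ∧ c₁ ≠ c₃ ∧ c₂ ≠ c₃) ∧
    (∀ b₁' b₂' b₃' : ℂ → ℂ,
      (∀ z : ℂ, b₁' z * c₁ + b₂' z * c₂ + b₃' z * c₃ = phi 2 z) →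
      (∀ z : ℂ, b₁' z * c₁ ^ 2 + b₂' z * c₂ ^ 2 + b₃' z * c₃ ^ 2 = 2 * phi 3 z) →
      (∀ z : ℂ, b₁' z * c₁ ^ 3 + b₂' z * c₂ ^ 3 + b₃' z * c₃ ^ 3 = 6 * phi 4 z) →
      b₁' = b₁ ∧ b₂' = b₂ ∧ b₃' = b₃) ∧
    LinearIndependent ℂ ![b₁, b₂, b₃] := by
  -- Key: any (α,β,γ) annihilated by all three moment vectors must vanish
  have K : ∀ α β γ : ℂ, (α*c₁+β*c₁^2+γ*c₁^3 = 0) → (α*c₂+β*c₂^2+γ*c₂^3 = 0) →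
      (α*c₃+β*c₃^2+γ*c₃^3 = 0) → α = 0 ∧ β = 0 ∧ γ = 0 := by
    intro α β γ k1 k2 k3
    have hrel : ∀ z, α * phi 2 z + (2*β) * phi 3 z + (6*γ) * phi 4 z = 0 := by
      intro z
      linear_combination -(α*(h1 z)) - β*(h2 z) - γ*(h3 z) + (b₁ z)*k1 + (b₂ z)*k2 + (b₃ z)*k3
    obtain ⟨hA, hB, hC⟩ := phi_indep _ _ _ hrel
    exact ⟨hA, by linear_combination hB/2, by linear_combination hC/6⟩
  have hc1 : c₁ ≠ 0 := by
    intro h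
    have := (K (c₂*c₃) (-(c₂+c₃)) 1 (by rw [h]; ring) (by ring) (by ring)).2.2
    exact one_ne_zero this
  have hc2 : c₂ ≠ 0 := by
    intro h
    have := (K (c₁*c₃) (-(c₁+c₃)) 1 (by ring) (by rw [h]; ring) (by ring)).2.2
    exact one_ne_zero this
  have hc3 : c₃ ≠ 0 := by
    intro h
    have := (K (c₁*c₂) (-(c₁+c₂)) 1 (by ring) (by ring) (by rw [h]; ring)).2.2
    exact one_ne_zero this
  have h12 : c₁ ≠ c₂ := by
    intro h
    have := (K (c₁*c₃) (-(c₁+c₃)) 1 (by ring) (by rw [← h]; ring) (by ring)).2.2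
    exact one_ne_zero this
  have h13 : c₁ ≠ c₃ := by
    intro h
    have := (K (c₁*c₂) (-(c₁+c₂)) 1 (by ring) (by ring) (by rw [← h]; ring)).2.2
    exact one_ne_zero this
  have h23 : c₂ ≠ c₃ := by
    intro h
    have := (K (c₂*c₁) (-(c₂+c₁)) 1 (by ring) (by ring) (by rw [← h]; ring)).2.2
    exact one_ne_zero this
  have hD1 : c₁*(c₁-c₂)*(c₁-c₃) ≠ 0 :=
    mul_ne_zero (mul_ne_zero hc1 (sub_ne_zero.mpr h12)) (sub_ne_zero.mpr h13)
  have hD2 : c₂*(c₂-c₁)*(c₂-c₃) ≠ 0 :=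
    mul_ne_zero (mul_ne_zero hc2 (sub_ne_zero.mpr (Ne.symm h12))) (sub_ne_zero.mpr h23)
  have hD3 : c₃*(c₃-c₁)*(c₃-c₂) ≠ 0 :=
    mul_ne_zero (mul_ne_zero hc3 (sub_ne_zero.mpr (Ne.symm h13))) (sub_ne_zero.mpr (Ne.symm h23))
  -- solver for the homogeneous system
  have S : ∀ x y w : ℂ, (x*c₁+y*c₂+w*c₃ = 0) → (x*c₁^2+y*c₂^2+w*c₃^2 = 0) →
      (x*c₁^3+y*c₂^3+w*c₃^3 = 0) → x = 0 ∧ y = 0 ∧ w = 0 := by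
    intro x y w e1 e2 e3
    have hx : x * (c₁*(c₁-c₂)*(c₁-c₃)) = 0 := by
      linear_combination (c₂*c₃)*e1 - (c₂+c₃)*e2 + e3
    have hy : y * (c₂*(c₂-c₁)*(c₂-c₃)) = 0 := by
      linear_combination (c₁*c₃)*e1 - (c₁+c₃)*e2 + e3
    have hw : w * (c₃*(c₃-c₁)*(c₃-c₂)) = 0 := by
      linear_combination (c₁*c₂)*e1 - (c₁+c₂)*e2 + e3
    exact ⟨(mul_eq_zero.mp hx).resolve_right hD1,
      (mul_eq_zero.mp hy).resolve_right hD2,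
      (mul_eq_zero.mp hw).resolve_right hD3⟩
  refine ⟨⟨hc1, hc2, hc3, h12, h13, h23⟩, ?_, ?_⟩
  · intro b₁' b₂' b₃' h1' h2' h3'
    have key : ∀ z, b₁' z - b₁ z = 0 ∧ b₂' z - b₂ z = 0 ∧ b₃' z - b₃ z = 0 := by
      intro z
      exact S _ _ _ (by linear_combination h1' z - h1 z)
        (by linear_combination h2' z - h2 z) (by linear_combination h3' z - h3 z)
    exact ⟨funext fun z => sub_eq_zero.mp (key z).1,
      funext fun z => sub_eq_zero.mp (key z).2.1,
      funext fun z => sub_eq_zero.mp (key z).2.2⟩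
  · -- linear independence of b₁, b₂, b₃
    have E1 : ∀ z, (c₁*(c₁-c₂)*(c₁-c₃)) * b₁ z
        = c₂*c₃*phi 2 z - (c₂+c₃)*(2*phi 3 z) + 6*phi 4 z := by
      intro z
      linear_combination (c₂*c₃)*(h1 z) - (c₂+c₃)*(h2 z) + h3 z
    have E2 : ∀ z, (c₂*(c₂-c₁)*(c₂-c₃)) * b₂ z
        = c₁*c₃*phi 2 z - (c₁+c₃)*(2*phi 3 z) + 6*phi 4 z := by
      intro z
      linear_combination (c₁*c₃)*(h1 z) - (c₁+c₃)*(h2 z) + h3 z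
    have E3 : ∀ z, (c₃*(c₃-c₁)*(c₃-c₂)) * b₃ z
        = c₁*c₂*phi 2 z - (c₁+c₂)*(2*phi 3 z) + 6*phi 4 z := by
      intro z
      linear_combination (c₁*c₂)*(h1 z) - (c₁+c₂)*(h2 z) + h3 z
    rw [Fintype.linearIndependent_iff]
    intro g hsum
    set D₁ := c₁*(c₁-c₂)*(c₁-c₃) with hD₁def
    set D₂ := c₂*(c₂-c₁)*(c₂-c₃) with hD₂def
    set D₃ := c₃*(c₃-c₁)*(c₃-c₂) with hD₃def
    have R : ∀ z, g 0 * b₁ z + g 1 * b₂ z + g 2 * b₃ z = 0 := by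
      intro z
      have := congrFun hsum z
      simpa [Fin.sum_univ_three, Matrix.cons_val_zero, Matrix.cons_val_one, Matrix.head_cons,
        Pi.smul_apply, smul_eq_mul] using this
    have hrel : ∀ z,
        (g 0*D₂*D₃*(c₂*c₃) + g 1*D₁*D₃*(c₁*c₃) + g 2*D₁*D₂*(c₁*c₂)) * phi 2 z
        + (-2*(g 0*D₂*D₃*(c₂+c₃) + g 1*D₁*D₃*(c₁+c₃) + g 2*D₁*D₂*(c₁+c₂))) * phi 3 z
        + (6*(g 0*D₂*D₃ + g 1*D₁*D₃ + g 2*D₁*D₂)) * phi 4 z = 0 := by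
      intro z
      linear_combination -((g 0*D₂*D₃)*(E1 z)) - (g 1*D₁*D₃)*(E2 z) - (g 2*D₁*D₂)*(E3 z)
        + (D₁*D₂*D₃)*(R z)
    obtain ⟨hA, hB, hC⟩ := phi_indep _ _ _ hrel
    have hg0 : g 0 * (D₂*D₃*((c₁-c₂)*(c₁-c₃))) = 0 := by
      linear_combination hA + (c₁/2)*hB + (c₁^2/6)*hC
    have hg1 : g 1 * (D₁*D₃*((c₂-c₁)*(c₂-c₃))) = 0 := by
      linear_combination hA + (c₂/2)*hB + (c₂^2/6)*hC
    have hg2 : g 2 * (D₁*D₂*((c₃-c₁)*(c₃-c₂))) = 0 := by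
      linear_combination hA + (c₃/2)*hB + (c₃^2/6)*hC
    have ne0 : D₂*D₃*((c₁-c₂)*(c₁-c₃)) ≠ 0 :=
      mul_ne_zero (mul_ne_zero hD2 hD3)
        (mul_ne_zero (sub_ne_zero.mpr h12) (sub_ne_zero.mpr h13))
    have ne1 : D₁*D₃*((c₂-c₁)*(c₂-c₃)) ≠ 0 :=
      mul_ne_zero (mul_ne_zero hD1 hD3)
        (mul_ne_zero (sub_ne_zero.mpr (Ne.symm h12)) (sub_ne_zero.mpr h23))
    have ne2 : D₁*D₂*((c₃-c₁)*(c₃-c₂)) ≠ 0 :=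
      mul_ne_zero (mul_ne_zero hD1 hD2)
        (mul_ne_zero (sub_ne_zero.mpr (Ne.symm h13)) (sub_ne_zero.mpr (Ne.symm h23)))
    intro i
    fin_cases i
    · exact (mul_eq_zero.mp hg0).resolve_right ne0
    · exact (mul_eq_zero.mp hg1).resolve_right ne1
    · exact (mul_eq_zero.mp hg2).resolve_right ne2
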